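/- In the KLR algebra R(ν), for adjacent vertices (i·j = -1), the sequence i' i j i i'' (with i not adjacent to any vertex of i'' and j not adjacent to any vertex of i'' either) has an m-factorization through the two sequences i' j i i'' i and i' i i'' i j, arising from the cubic relation δ-three-strand identity ψ_L − ψ_R = 1 applied at the iji triple. -/

import Mathlib

namespace KLRPaper


/-- The sequence obtained from `i` by swapping the entries in positions `r` and `r+1`
(0-indexed); identity if `r+1` is out of range. -/
def swapSeq {I : Type} {m : ℕ} (r : ℕ) (i : Fin m → I) : Fin m → I :=
  fun k =>
    if h : r + 1 < m then
      i (Equiv.swap (⟨r, Nat.lt_of_succ_lt h⟩ : Fin m) (⟨r + 1, h⟩ : Fin m) k)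
    else i k

/-- The Khovanov–Lauda–Rouquier algebra of a simply-laced quiver with vertex set `I`
and adjacency relation `adj`, on `m` strands, presented by its generators
(idempotents `e i`, dots `x r i`, crossings `δ r i`) and the KLR relations. -/
structure KLR (I : Type) [DecidableEq I] (adj : I → I → Prop) (m : ℕ)
    (A : Type) [Ring A] where
  e : (Fin m → I) → A
  x : Fin m → (Fin m → I) → A
  δ : ℕ → (Fin m → I) → A
  e_mul_e : ∀ i j, e i * e j = if i = j then e i else 0
  e_mul_x : ∀ r i, e i * x r i = x r i
  x_mul_e : ∀ r i, x r i * e i = x r i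
  x_mul_x : ∀ r s i, x r i * x s i = x s i * x r i
  e_mul_δ : ∀ (r : ℕ) (i : Fin m → I), e (swapSeq r i) * δ r i = δ r i
  δ_mul_e : ∀ (r : ℕ) (i : Fin m → I), δ r i * e i = δ r i
  δδ_same : ∀ (r : ℕ) (h : r + 1 < m) (i : Fin m → I),
    i ⟨r, Nat.lt_of_succ_lt h⟩ = i ⟨r + 1, h⟩ →
    δ r (swapSeq r i) * δ r i = 0
  δδ_orth : ∀ (r : ℕ) (h : r + 1 < m) (i : Fin m → I),
    i ⟨r, Nat.lt_of_succ_lt h⟩ ≠ i ⟨r + 1, h⟩ →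
    ¬ adj (i ⟨r, Nat.lt_of_succ_lt h⟩) (i ⟨r + 1, h⟩) →
    δ r (swapSeq r i) * δ r i = e i
  δδ_adj : ∀ (r : ℕ) (h : r + 1 < m) (i : Fin m → I),
    adj (i ⟨r, Nat.lt_of_succ_lt h⟩) (i ⟨r + 1, h⟩) →
    δ r (swapSeq r i) * δ r i = x ⟨r, Nat.lt_of_succ_lt h⟩ i + x ⟨r + 1, h⟩ i
  δx_far : ∀ (r : ℕ) (s : Fin m) (i : Fin m → I), s.val ≠ r → s.val ≠ r + 1 →
    δ r i * x s i = x s (swapSeq r i) * δ r i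
  δx_diff1 : ∀ (r : ℕ) (h : r + 1 < m) (i : Fin m → I),
    i ⟨r, Nat.lt_of_succ_lt h⟩ ≠ i ⟨r + 1, h⟩ →
    δ r i * x ⟨r, Nat.lt_of_succ_lt h⟩ i = x ⟨r + 1, h⟩ (swapSeq r i) * δ r i
  δx_diff2 : ∀ (r : ℕ) (h : r + 1 < m) (i : Fin m → I),
    i ⟨r, Nat.lt_of_succ_lt h⟩ ≠ i ⟨r + 1, h⟩ →
    δ r i * x ⟨r + 1, h⟩ i = x ⟨r, Nat.lt_of_succ_lt h⟩ (swapSeq r i) * δ r i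
  δx_same1 : ∀ (r : ℕ) (h : r + 1 < m) (i : Fin m → I),
    i ⟨r, Nat.lt_of_succ_lt h⟩ = i ⟨r + 1, h⟩ →
    δ r i * x ⟨r, Nat.lt_of_succ_lt h⟩ i - x ⟨r + 1, h⟩ (swapSeq r i) * δ r i = e i
  δx_same2 : ∀ (r : ℕ) (h : r + 1 < m) (i : Fin m → I),
    i ⟨r, Nat.lt_of_succ_lt h⟩ = i ⟨r + 1, h⟩ →
    x ⟨r, Nat.lt_of_succ_lt h⟩ (swapSeq r i) * δ r i - δ r i * x ⟨r + 1, h⟩ i = e i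
  braid_easy : ∀ (r : ℕ) (h : r + 2 < m) (i : Fin m → I),
    ¬ (i ⟨r, by omega⟩ = i ⟨r + 2, h⟩ ∧ adj (i ⟨r, by omega⟩) (i ⟨r + 1, by omega⟩)) →
    δ r (swapSeq (r + 1) (swapSeq r i)) * δ (r + 1) (swapSeq r i) * δ r i =
      δ (r + 1) (swapSeq r (swapSeq (r + 1) i)) * δ r (swapSeq (r + 1) i) * δ (r + 1) i
  braid_hard : ∀ (r : ℕ) (h : r + 2 < m) (i : Fin m → I),
    i ⟨r, by omega⟩ = i ⟨r + 2, h⟩ → adj (i ⟨r, by omega⟩) (i ⟨r + 1, by omega⟩) →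
    δ r (swapSeq (r + 1) (swapSeq r i)) * δ (r + 1) (swapSeq r i) * δ r i -
      δ (r + 1) (swapSeq r (swapSeq (r + 1) i)) * δ r (swapSeq (r + 1) i) * δ (r + 1) i
      = e i

/-- The cyclotomic quotient `R_ν^Λ` of the KLR algebra at the dominant weight
`Λ = Σ λ_i · i` (a finitely supported function `I →₀ ℕ`): it additionally satisfies
`x_{1,i}^{λ_{i₁}} 1_i = 0` for every sequence `i`. -/
structure CycKLR (I : Type) [DecidableEq I] (adj : I → I → Prop) (m : ℕ)
    (A : Type) [Ring A] (Λ : I →₀ ℕ) extends KLR I adj m A where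
  cyc : ∀ (h : 0 < m) (i : Fin m → I), x ⟨0, h⟩ i ^ Λ (i ⟨0, h⟩) * e i = 0



/-- `i` has an `r`-factorization through the finite family of sequences `j a`
(with the `r`-th strand of `i` occurring at position `t a` of `j a`): the
idempotent `1_i` factors as `Σ_a u_a v_a` where `u_a ∈ 1_i A 1_{j_a}` and
`v_a ∈ 1_{j_a} A 1_i` are built from the minimal diagrams `(_{i}1_{j_a})` and
`(_{j_a}1_{i})` bordered by elements of `R_{i',i_r,i'''}`, so that the dot on the
`r`-th strand of `i` slides through them onto the `t a`-th strand of `j a`. -/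
def RFactorization {I : Type} [DecidableEq I] {adj : I → I → Prop} {m : ℕ}
    {A : Type} [Ring A] (K : KLR I adj m A) (i : Fin m → I) (r : Fin m)
    {n : ℕ} (j : Fin n → (Fin m → I)) (t : Fin n → Fin m) : Prop :=
  ∃ u v : Fin n → A,
    (∀ a, u a = K.e i * u a * K.e (j a)) ∧
    (∀ a, v a = K.e (j a) * v a * K.e i) ∧
    (∀ a, K.x r i * u a = u a * K.x (t a) (j a)) ∧
    (∀ a, K.x (t a) (j a) * v a = v a * K.x r i) ∧
    K.e i = ∑ a, u a * v a

/-- The sequence `i' j i i'' i`: the third strand of the triple `i j i` (at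
positions `r, r+1, r+2`) is pulled to the far right past `i''`, and the first
two entries of the triple are transposed. -/
def pullSeq1 {I : Type} {m : ℕ} (r : ℕ) (hr : r + 2 < m) (q : Fin m → I) :
    Fin m → I := fun k =>
  if k.val < r then q k
  else if k.val = r then q ⟨r + 1, by omega⟩
  else if k.val = r + 1 then q ⟨r, by omega⟩
  else if h : k.val + 1 < m then q ⟨k.val + 1, h⟩
  else q ⟨r, by omega⟩

/-- The sequence `i' i i'' i j`: the last two strands of the triple `i j i` (at
positions `r, r+1, r+2`) are pulled to the far right past `i''`. -/
def pullSeq2 {I : Type} {m : ℕ} (r : ℕ) (hr : r + 2 < m) (q : Fin m → I) :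
    Fin m → I := fun k =>
  if k.val ≤ r then q k
  else if h : k.val + 2 < m then q ⟨k.val + 2, h⟩
  else if k.val = m - 2 then q ⟨r, by omega⟩
  else q ⟨r + 1, by omega⟩

section Infra

variable {I : Type} {m : ℕ}

theorem swapSeq_apply {a : ℕ} (h : a + 1 < m) (c : Fin m → I) (k : Fin m) :
    swapSeq a c k =
      if k.val = a then c ⟨a + 1, h⟩
      else if k.val = a + 1 then c ⟨a, Nat.lt_of_succ_lt h⟩
      else c k := by
  unfold swapSeq
  rw [dif_pos h, Equiv.swap_apply_def, apply_ite c, apply_ite c]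
  simp only [Fin.ext_iff]

theorem swapSeq_swapSeq (a : ℕ) (c : Fin m → I) : swapSeq a (swapSeq a c) = c := by
  funext k
  simp only [swapSeq]
  by_cases h : a + 1 < m
  · simp [h]
  · simp [h]

def applyWord : List ℕ → (Fin m → I) → (Fin m → I)
  | [], c => c
  | a :: w, c => swapSeq a (applyWord w c)

@[simp] theorem applyWord_nil (c : Fin m → I) : applyWord [] c = c := rfl

@[simp] theorem applyWord_cons (a : ℕ) (w : List ℕ) (c : Fin m → I) :
    applyWord (a :: w) c = swapSeq a (applyWord w c) := rfl

theorem applyWord_append (u v : List ℕ) (c : Fin m → I) :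
    applyWord (u ++ v) c = applyWord u (applyWord v c) := by
  induction u with
  | nil => rfl
  | cons a u ih => simp [applyWord_cons, ih]

theorem applyWord_rev_applyWord (w : List ℕ) (c : Fin m → I) :
    applyWord w.reverse (applyWord w c) = c := by
  induction w with
  | nil => rfl
  | cons a w ih =>
    rw [applyWord_cons, List.reverse_cons, applyWord_append, applyWord_cons,
      applyWord_nil, swapSeq_swapSeq, ih]

theorem applyWord_applyWord_rev (w : List ℕ) (c : Fin m → I) :
    applyWord w (applyWord w.reverse c) = c := by
  have h := applyWord_rev_applyWord w.reverse c
  rwa [List.reverse_reverse] at h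

theorem mem_range'_le {s n a : ℕ} (h : a ∈ List.range' s n) : s ≤ a ∧ a < s + n := by
  obtain ⟨i, hi, rfl⟩ := List.mem_range'.1 h
  omega

theorem applyWord_revRange' {a : ℕ} (c : Fin m → I) :
    ∀ L : ℕ, ∀ _ : a + L < m, ∀ k : Fin m,
    applyWord (List.range' a L).reverse c k =
      if k.val < a then c k
      else if h2 : k.val < a + L then c ⟨k.val + 1, by omega⟩
      else if k.val = a + L then c ⟨a, by omega⟩
      else c k := by
  intro L
  induction L with
  | zero =>
    intro hm k
    simp only [List.range', List.reverse_nil, applyWord_nil]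
    split_ifs with h1 h2 h3
    · rfl
    · omega
    · exact congrArg c (Fin.ext (by simp only [Fin.val_mk]; omega))
    · rfl
  | succ L ih =>
    intro hm k
    have hm' : a + L < m := by omega
    rw [List.range'_concat, List.reverse_append]
    simp only [List.reverse_singleton, List.singleton_append, applyWord_cons, one_mul]
    rw [swapSeq_apply (show a + L + 1 < m by omega)]
    simp only [ih hm', Fin.val_mk]
    split_ifs <;>
      first
        | rfl
        | omega
        | exact congrArg c (Fin.ext (by simp only [Fin.val_mk]; omega))

theorem revRange'_lt {a L : ℕ} (c : Fin m → I) (hL : a + L < m) (k : Fin m)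
    (hk : k.val < a) : applyWord (List.range' a L).reverse c k = c k := by
  rw [applyWord_revRange' c L hL k, if_pos hk]

theorem revRange'_mid {a L : ℕ} (c : Fin m → I) (hL : a + L < m) (k : Fin m)
    (hk1 : a ≤ k.val) (hk2 : k.val < a + L) :
    applyWord (List.range' a L).reverse c k = c ⟨k.val + 1, by omega⟩ := by
  rw [applyWord_revRange' c L hL k, if_neg (by omega), dif_pos hk2]

theorem revRange'_top {a L : ℕ} (c : Fin m → I) (hL : a + L < m) (k : Fin m)
    (hk : k.val = a + L) :
    applyWord (List.range' a L).reverse c k = c ⟨a, by omega⟩ := by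
  rw [applyWord_revRange' c L hL k, if_neg (by omega), dif_neg (by omega), if_pos hk]

theorem revRange'_gt {a L : ℕ} (c : Fin m → I) (hL : a + L < m) (k : Fin m)
    (hk : a + L < k.val) : applyWord (List.range' a L).reverse c k = c k := by
  rw [applyWord_revRange' c L hL k, if_neg (by omega), dif_neg (by omega),
    if_neg (by omega)]

def Orth (adj : I → I → Prop) : List ℕ → (Fin m → I) → Prop
  | [], _ => True
  | a :: w, c =>
      (if h : a + 1 < m then
        applyWord w c ⟨a, Nat.lt_of_succ_lt h⟩ ≠ applyWord w c ⟨a + 1, h⟩ ∧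
        ¬ adj (applyWord w c ⟨a, Nat.lt_of_succ_lt h⟩) (applyWord w c ⟨a + 1, h⟩)
      else False) ∧ Orth adj w c

theorem orth_nil (adj : I → I → Prop) (c : Fin m → I) : Orth adj [] c := trivial

theorem orth_revRange' (adj : I → I → Prop) {a : ℕ} (c : Fin m → I) :
    ∀ L : ℕ, ∀ _ : a + L < m,
    (∀ t : ℕ, ∀ _ : t < L,
      c ⟨a, by omega⟩ ≠ c ⟨a + t + 1, by omega⟩ ∧
      ¬ adj (c ⟨a, by omega⟩) (c ⟨a + t + 1, by omega⟩)) →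
    Orth adj (List.range' a L).reverse c := by
  intro L
  induction L with
  | zero => intro _ _; exact trivial
  | succ L ih =>
    intro hL H
    rw [List.range'_concat, List.reverse_append]
    simp only [List.reverse_singleton, List.singleton_append, one_mul]
    refine ⟨?_, ih (by omega) (fun t ht => H t (by omega))⟩
    rw [dif_pos (show a + L + 1 < m by omega)]
    have e1 : applyWord (List.range' a L).reverse c ⟨a + L, by omega⟩ = c ⟨a, by omega⟩ :=
      revRange'_top c (by omega) _ rfl
    have e2 : applyWord (List.range' a L).reverse c ⟨a + L + 1, by omega⟩ =
        c ⟨a + L + 1, by omega⟩ :=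
      revRange'_gt c (by omega) _ (Nat.lt_succ_self _)
    rw [e1, e2]
    exact H L (by omega)

end Infra

section InfraK

variable {I : Type} [DecidableEq I] {adj : I → I → Prop} {m : ℕ}
  {A : Type} [Ring A]

def chain (K : KLR I adj m A) : List ℕ → (Fin m → I) → A
  | [], c => K.e c
  | a :: w, c => K.δ a (applyWord w c) * chain K w c

@[simp] theorem chain_nil (K : KLR I adj m A) (c : Fin m → I) :
    chain K [] c = K.e c := rfl

@[simp] theorem chain_cons (K : KLR I adj m A) (a : ℕ) (w : List ℕ) (c : Fin m → I) :
    chain K (a :: w) c = K.δ a (applyWord w c) * chain K w c := rfl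

theorem e_chain (K : KLR I adj m A) (w : List ℕ) (c : Fin m → I) :
    K.e (applyWord w c) * chain K w c = chain K w c := by
  induction w with
  | nil => simp [K.e_mul_e]
  | cons a w ih =>
    rw [chain_cons, applyWord_cons, ← mul_assoc, K.e_mul_δ]

theorem chain_e (K : KLR I adj m A) (w : List ℕ) (c : Fin m → I) :
    chain K w c * K.e c = chain K w c := by
  induction w with
  | nil => simp [K.e_mul_e]
  | cons a w ih => rw [chain_cons, mul_assoc, ih]

theorem chain_append (K : KLR I adj m A) (u v : List ℕ) (c : Fin m → I) :
    chain K (u ++ v) c = chain K u (applyWord v c) * chain K v c := by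
  induction u with
  | nil => rw [List.nil_append, chain_nil]; exact (e_chain K v c).symm
  | cons a u ih =>
    rw [List.cons_append, chain_cons, chain_cons, ih, ← mul_assoc,
      applyWord_append]

theorem chain_cancel (K : KLR I adj m A) : ∀ (w : List ℕ) (c : Fin m → I),
    Orth adj w c →
    chain K w.reverse (applyWord w c) * chain K w c = K.e c := by
  intro w
  induction w with
  | nil => intro c _; simp [K.e_mul_e]
  | cons a w ih =>
    intro c H
    obtain ⟨h1, h2⟩ := H
    by_cases hm : a + 1 < m
    · rw [dif_pos hm] at h1
      rw [List.reverse_cons, chain_append, applyWord_cons]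
      simp only [applyWord_cons, applyWord_nil, chain_cons, chain_nil, swapSeq_swapSeq]
      rw [mul_assoc, mul_assoc, ← mul_assoc (K.e (swapSeq a (applyWord w c)))]
      rw [K.e_mul_δ]
      rw [← mul_assoc (K.δ a (swapSeq a (applyWord w c)))]
      rw [K.δδ_orth a hm (applyWord w c) h1.1 h1.2]
      rw [← mul_assoc, mul_assoc, e_chain]
      exact ih c h2
    · rw [dif_neg hm] at h1
      exact h1.elim

theorem chain_x_far (K : KLR I adj m A) {p : ℕ} (hp : p < m) :
    ∀ (w : List ℕ) (c : Fin m → I),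
    (∀ a ∈ w, p ≠ a ∧ p ≠ a + 1) →
    K.x ⟨p, hp⟩ (applyWord w c) * chain K w c = chain K w c * K.x ⟨p, hp⟩ c := by
  intro w
  induction w with
  | nil => intro c _; simp only [applyWord_nil, chain_nil]; rw [K.e_mul_x, K.x_mul_e]
  | cons a w ih =>
    intro c H
    have h := H a List.mem_cons_self
    rw [applyWord_cons, chain_cons, ← mul_assoc,
      ← K.δx_far a ⟨p, hp⟩ (applyWord w c) h.1 h.2, mul_assoc,
      ih c (fun b hb => H b (List.mem_cons_of_mem a hb)), ← mul_assoc]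

end InfraK



theorem conj_assemble {A : Type} [Ring A] {x1 x2 x3 P Q : A}
    (h1 : x1 * P = P * x2) (h2 : x2 * Q = Q * x3) :
    x1 * (P * Q) = (P * Q) * x3 := by
  rw [← mul_assoc, h1, mul_assoc, h2, ← mul_assoc]

section InfraK2

variable {I : Type} [DecidableEq I] {adj : I → I → Prop} {m : ℕ}
  {A : Type} [Ring A]

theorem x_chain_single_diff1 (K : KLR I adj m A) (b : ℕ) (hb : b + 1 < m)
    (c : Fin m → I) (hcol : c ⟨b, Nat.lt_of_succ_lt hb⟩ ≠ c ⟨b + 1, hb⟩) :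
    K.x ⟨b + 1, hb⟩ (applyWord [b] c) * chain K [b] c
      = chain K [b] c * K.x ⟨b, Nat.lt_of_succ_lt hb⟩ c := by
  simp only [applyWord_cons, applyWord_nil, chain_cons, chain_nil]
  rw [← mul_assoc, ← K.δx_diff1 b hb c hcol, mul_assoc, K.x_mul_e, mul_assoc,
    K.e_mul_x]

theorem slide_chain_diff_right (K : KLR I adj m A) (F : List ℕ) (b : ℕ)
    (c : Fin m → I) (hb : b + 1 < m)
    (hcol : c ⟨b, Nat.lt_of_succ_lt hb⟩ ≠ c ⟨b + 1, hb⟩)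
    (hfar : ∀ a ∈ F, b + 1 ≠ a ∧ b + 1 ≠ a + 1) :
    K.x ⟨b + 1, hb⟩ (applyWord (F ++ [b]) c) * chain K (F ++ [b]) c
      = chain K (F ++ [b]) c * K.x ⟨b, Nat.lt_of_succ_lt hb⟩ c := by
  rw [chain_append, applyWord_append]
  exact conj_assemble (chain_x_far K hb F (applyWord [b] c) hfar)
    (x_chain_single_diff1 K b hb c hcol)

theorem slide_chain_diff_left (K : KLR I adj m A) (G : List ℕ) (b : ℕ)
    (c : Fin m → I) (hb : b + 1 < m)
    (hcol : applyWord G c ⟨b, Nat.lt_of_succ_lt hb⟩ ≠ applyWord G c ⟨b + 1, hb⟩)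
    (hfar : ∀ a ∈ G, b + 1 ≠ a ∧ b + 1 ≠ a + 1) :
    K.x ⟨b, Nat.lt_of_succ_lt hb⟩ (applyWord (b :: G) c) * chain K (b :: G) c
      = chain K (b :: G) c * K.x ⟨b + 1, hb⟩ c := by
  simp only [applyWord_cons, chain_cons]
  exact conj_assemble (K.δx_diff2 b hb (applyWord G c) hcol).symm
    (chain_x_far K hb G c hfar)

end InfraK2

set_option maxHeartbeats 0 in
set_option linter.unreachableTactic false in
/-- For adjacent vertices (`i·j = -1`), the sequence
`i' i j i i''` (with neither `i` nor `j` adjacent or equal to any vertex of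
`i''`) has an `m`-factorization through the two sequences `i' j i i'' i` and
`i' i i'' i j`, arising from the cubic relation `ψ_L - ψ_R = 1` applied at the
`iji` triple. -/
theorem iji_triple_factorization {I : Type} [DecidableEq I] {adj : I → I → Prop}
    {m : ℕ} {A : Type} [Ring A] (K : KLR I adj m A) (q : Fin m → I)
    (r : ℕ) (hm : r + 4 ≤ m)
    (haa : q ⟨r + 2, by omega⟩ = q ⟨r, by omega⟩)
    (hadj : adj (q ⟨r, by omega⟩) (q ⟨r + 1, by omega⟩))
    (htail : ∀ k : Fin m, r + 3 ≤ k.val →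
      q k ≠ q ⟨r, by omega⟩ ∧ ¬ adj (q ⟨r, by omega⟩) (q k) ∧
      q k ≠ q ⟨r + 1, by omega⟩ ∧ ¬ adj (q ⟨r + 1, by omega⟩) (q k)) :
    RFactorization K q ⟨m - 1, by omega⟩
      ![pullSeq1 r (by omega) q, pullSeq2 r (by omega) q]
      ![⟨m - 2, by omega⟩, ⟨m - 3, by omega⟩] := by
  obtain ⟨L, rfl⟩ : ∃ L, m = r + 4 + L := ⟨m - (r + 4), by omega⟩
  simp only [show r + 4 + L - 1 = r + 3 + L from by omega,
    show r + 4 + L - 2 = r + 2 + L from by omega,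
    show r + 4 + L - 3 = r + 1 + L from by omega]
  have hs1 : r + 1 < r + 4 + L := by omega
  have hs2 : r + 1 + 1 < r + 4 + L := by omega
  -- list splitting facts
  have hAsplit : (List.range' (r + 2) (L + 1)) = (List.range' (r + 2) L) ++ [r + 2 + L] := by
    rw [List.range'_concat, Nat.one_mul]
  have hArev : (List.range' (r + 2) (L + 1)).reverse = (r + 2 + L) :: (List.range' (r + 2) L).reverse := by
    rw [hAsplit, List.reverse_append, List.reverse_singleton, List.singleton_append]
  have hBsplit : (List.range' (r + 1) (L + 1)) = (List.range' (r + 1) L) ++ [r + 1 + L] := by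
    rw [List.range'_concat, Nat.one_mul]
  have hBrev : (List.range' (r + 1) (L + 1)).reverse = (r + 1 + L) :: (List.range' (r + 1) L).reverse := by
    rw [hBsplit, List.reverse_append, List.reverse_singleton, List.singleton_append]
  -- pointwise sequence computations
  have F1 : applyWord (List.range' (r + 2) (L + 1)).reverse (swapSeq r q) = (pullSeq1 r (by omega) q) := by
    funext k
    have hk := k.isLt
    simp only [pullSeq1]
    rcases Nat.lt_or_ge k.val (r + 2) with k1 | k1
    · rw [revRange'_lt (swapSeq r q) (by omega) k k1, swapSeq_apply hs1 q k]
      split_ifs <;> first | rfl | omega | (exact congrArg q (Fin.ext (by simp only [Fin.val_mk]; omega))) | (exact haa) | (exact haa.symm) | (exact (congrArg q (Fin.ext (by simp only [Fin.val_mk]; omega))).trans haa) | (exact haa.trans (congrArg q (Fin.ext (by simp only [Fin.val_mk]; omega)))) | (exact ((congrArg q (Fin.ext (by simp only [Fin.val_mk]; omega))).trans haa).symm) | (exact (haa.trans (congrArg q (Fin.ext (by simp only [Fin.val_mk]; omega)))).symm)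
    · rcases Nat.lt_or_ge k.val (r + 3 + L) with k2 | k2
      · rw [revRange'_mid (swapSeq r q) (by omega) k (by omega) (by omega),
          swapSeq_apply hs1 q ⟨k.val + 1, by omega⟩]
        simp only [Fin.val_mk]
        split_ifs <;> first | rfl | omega | (exact congrArg q (Fin.ext (by simp only [Fin.val_mk]; omega))) | (exact haa) | (exact haa.symm) | (exact (congrArg q (Fin.ext (by simp only [Fin.val_mk]; omega))).trans haa) | (exact haa.trans (congrArg q (Fin.ext (by simp only [Fin.val_mk]; omega)))) | (exact ((congrArg q (Fin.ext (by simp only [Fin.val_mk]; omega))).trans haa).symm) | (exact (haa.trans (congrArg q (Fin.ext (by simp only [Fin.val_mk]; omega)))).symm)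
      · rw [revRange'_top (swapSeq r q) (by omega) k (by omega),
          swapSeq_apply hs1 q ⟨r + 2, by omega⟩]
        simp only [Fin.val_mk]
        split_ifs <;> first | rfl | omega | (exact congrArg q (Fin.ext (by simp only [Fin.val_mk]; omega))) | (exact haa) | (exact haa.symm) | (exact (congrArg q (Fin.ext (by simp only [Fin.val_mk]; omega))).trans haa) | (exact haa.trans (congrArg q (Fin.ext (by simp only [Fin.val_mk]; omega)))) | (exact ((congrArg q (Fin.ext (by simp only [Fin.val_mk]; omega))).trans haa).symm) | (exact (haa.trans (congrArg q (Fin.ext (by simp only [Fin.val_mk]; omega)))).symm)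
  have hc2 : ∀ k : Fin (r + 4 + L), (applyWord (List.range' (r + 2) (L + 1)).reverse (swapSeq (r + 1) q)) k =
      if k.val ≤ r then q k
      else if k.val = r + 1 then q ⟨r + 2, by omega⟩
      else if h : k.val + 1 < r + 4 + L then q ⟨k.val + 1, h⟩
      else q ⟨r + 1, by omega⟩ := by
    intro k
    have hk := k.isLt
    rcases Nat.lt_or_ge k.val (r + 2) with k1 | k1
    · rw [revRange'_lt (swapSeq (r + 1) q) (by omega) k k1, swapSeq_apply hs2 q k]
      split_ifs <;> first | rfl | omega | (exact congrArg q (Fin.ext (by simp only [Fin.val_mk]; omega))) | (exact haa) | (exact haa.symm) | (exact (congrArg q (Fin.ext (by simp only [Fin.val_mk]; omega))).trans haa) | (exact haa.trans (congrArg q (Fin.ext (by simp only [Fin.val_mk]; omega)))) | (exact ((congrArg q (Fin.ext (by simp only [Fin.val_mk]; omega))).trans haa).symm) | (exact (haa.trans (congrArg q (Fin.ext (by simp only [Fin.val_mk]; omega)))).symm)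
    · rcases Nat.lt_or_ge k.val (r + 3 + L) with k2 | k2
      · rw [revRange'_mid (swapSeq (r + 1) q) (by omega) k (by omega) (by omega),
          swapSeq_apply hs2 q ⟨k.val + 1, by omega⟩]
        simp only [Fin.val_mk]
        split_ifs <;> first | rfl | omega | (exact congrArg q (Fin.ext (by simp only [Fin.val_mk]; omega))) | (exact haa) | (exact haa.symm) | (exact (congrArg q (Fin.ext (by simp only [Fin.val_mk]; omega))).trans haa) | (exact haa.trans (congrArg q (Fin.ext (by simp only [Fin.val_mk]; omega)))) | (exact ((congrArg q (Fin.ext (by simp only [Fin.val_mk]; omega))).trans haa).symm) | (exact (haa.trans (congrArg q (Fin.ext (by simp only [Fin.val_mk]; omega)))).symm)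
      · rw [revRange'_top (swapSeq (r + 1) q) (by omega) k (by omega),
          swapSeq_apply hs2 q ⟨r + 2, by omega⟩]
        simp only [Fin.val_mk]
        split_ifs <;> first | rfl | omega | (exact congrArg q (Fin.ext (by simp only [Fin.val_mk]; omega))) | (exact haa) | (exact haa.symm) | (exact (congrArg q (Fin.ext (by simp only [Fin.val_mk]; omega))).trans haa) | (exact haa.trans (congrArg q (Fin.ext (by simp only [Fin.val_mk]; omega)))) | (exact ((congrArg q (Fin.ext (by simp only [Fin.val_mk]; omega))).trans haa).symm) | (exact (haa.trans (congrArg q (Fin.ext (by simp only [Fin.val_mk]; omega)))).symm)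
  have F2 : applyWord (List.range' (r + 1) (L + 1)).reverse (applyWord (List.range' (r + 2) (L + 1)).reverse (swapSeq (r + 1) q)) = (pullSeq2 r (by omega) q) := by
    funext k
    have hk := k.isLt
    simp only [pullSeq2]
    rcases Nat.lt_or_ge k.val (r + 1) with k1 | k1
    · rw [revRange'_lt (applyWord (List.range' (r + 2) (L + 1)).reverse (swapSeq (r + 1) q)) (by omega) k k1, hc2 k]
      split_ifs <;> first | rfl | omega | (exact congrArg q (Fin.ext (by simp only [Fin.val_mk]; omega))) | (exact haa) | (exact haa.symm) | (exact (congrArg q (Fin.ext (by simp only [Fin.val_mk]; omega))).trans haa) | (exact haa.trans (congrArg q (Fin.ext (by simp only [Fin.val_mk]; omega)))) | (exact ((congrArg q (Fin.ext (by simp only [Fin.val_mk]; omega))).trans haa).symm) | (exact (haa.trans (congrArg q (Fin.ext (by simp only [Fin.val_mk]; omega)))).symm)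
    · rcases Nat.lt_or_ge k.val (r + 2 + L) with k2 | k2
      · rw [revRange'_mid (applyWord (List.range' (r + 2) (L + 1)).reverse (swapSeq (r + 1) q)) (by omega) k (by omega) (by omega), hc2 ⟨k.val + 1, by omega⟩]
        simp only [Fin.val_mk]
        split_ifs <;> first | rfl | omega | (exact congrArg q (Fin.ext (by simp only [Fin.val_mk]; omega))) | (exact haa) | (exact haa.symm) | (exact (congrArg q (Fin.ext (by simp only [Fin.val_mk]; omega))).trans haa) | (exact haa.trans (congrArg q (Fin.ext (by simp only [Fin.val_mk]; omega)))) | (exact ((congrArg q (Fin.ext (by simp only [Fin.val_mk]; omega))).trans haa).symm) | (exact (haa.trans (congrArg q (Fin.ext (by simp only [Fin.val_mk]; omega)))).symm)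
      · rcases Nat.lt_or_ge k.val (r + 3 + L) with k3 | k3
        · rw [revRange'_top (applyWord (List.range' (r + 2) (L + 1)).reverse (swapSeq (r + 1) q)) (by omega) k (by omega), hc2 ⟨r + 1, by omega⟩]
          simp only [Fin.val_mk]
          split_ifs <;> first | rfl | omega | (exact congrArg q (Fin.ext (by simp only [Fin.val_mk]; omega))) | (exact haa) | (exact haa.symm) | (exact (congrArg q (Fin.ext (by simp only [Fin.val_mk]; omega))).trans haa) | (exact haa.trans (congrArg q (Fin.ext (by simp only [Fin.val_mk]; omega)))) | (exact ((congrArg q (Fin.ext (by simp only [Fin.val_mk]; omega))).trans haa).symm) | (exact (haa.trans (congrArg q (Fin.ext (by simp only [Fin.val_mk]; omega)))).symm)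
        · rw [revRange'_gt (applyWord (List.range' (r + 2) (L + 1)).reverse (swapSeq (r + 1) q)) (by omega) k (by omega), hc2 k]
          split_ifs <;> first | rfl | omega | (exact congrArg q (Fin.ext (by simp only [Fin.val_mk]; omega))) | (exact haa) | (exact haa.symm) | (exact (congrArg q (Fin.ext (by simp only [Fin.val_mk]; omega))).trans haa) | (exact haa.trans (congrArg q (Fin.ext (by simp only [Fin.val_mk]; omega)))) | (exact ((congrArg q (Fin.ext (by simp only [Fin.val_mk]; omega))).trans haa).symm) | (exact (haa.trans (congrArg q (Fin.ext (by simp only [Fin.val_mk]; omega)))).symm)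
  have F3 : swapSeq r (swapSeq (r + 1) (swapSeq r q)) = q := by
    funext k
    simp only [swapSeq_apply hs1, swapSeq_apply hs2, Fin.val_mk]
    split_ifs <;> first | rfl | omega | (exact congrArg q (Fin.ext (by simp only [Fin.val_mk]; omega))) | (exact haa) | (exact haa.symm) | (exact (congrArg q (Fin.ext (by simp only [Fin.val_mk]; omega))).trans haa) | (exact haa.trans (congrArg q (Fin.ext (by simp only [Fin.val_mk]; omega)))) | (exact ((congrArg q (Fin.ext (by simp only [Fin.val_mk]; omega))).trans haa).symm) | (exact (haa.trans (congrArg q (Fin.ext (by simp only [Fin.val_mk]; omega)))).symm)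
  have F4 : swapSeq (r + 1) (swapSeq r (swapSeq (r + 1) q)) = q := by
    funext k
    simp only [swapSeq_apply hs1, swapSeq_apply hs2, Fin.val_mk]
    split_ifs <;> first | rfl | omega | (exact congrArg q (Fin.ext (by simp only [Fin.val_mk]; omega))) | (exact haa) | (exact haa.symm) | (exact (congrArg q (Fin.ext (by simp only [Fin.val_mk]; omega))).trans haa) | (exact haa.trans (congrArg q (Fin.ext (by simp only [Fin.val_mk]; omega)))) | (exact ((congrArg q (Fin.ext (by simp only [Fin.val_mk]; omega))).trans haa).symm) | (exact (haa.trans (congrArg q (Fin.ext (by simp only [Fin.val_mk]; omega)))).symm)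
  -- color values
  have hj0a : (pullSeq1 r (by omega) q) ⟨r + 2 + L, by omega⟩ = q ⟨r + 3 + L, by omega⟩ := by
    simp only [pullSeq1, Fin.val_mk]
    split_ifs <;> first | rfl | omega | (exact congrArg q (Fin.ext (by simp only [Fin.val_mk]; omega))) | (exact haa) | (exact haa.symm) | (exact (congrArg q (Fin.ext (by simp only [Fin.val_mk]; omega))).trans haa) | (exact haa.trans (congrArg q (Fin.ext (by simp only [Fin.val_mk]; omega)))) | (exact ((congrArg q (Fin.ext (by simp only [Fin.val_mk]; omega))).trans haa).symm) | (exact (haa.trans (congrArg q (Fin.ext (by simp only [Fin.val_mk]; omega)))).symm)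
  have hj0b : (pullSeq1 r (by omega) q) ⟨r + 2 + L + 1, by omega⟩ = q ⟨r, by omega⟩ := by
    simp only [pullSeq1, Fin.val_mk]
    split_ifs <;> first | rfl | omega | (exact congrArg q (Fin.ext (by simp only [Fin.val_mk]; omega))) | (exact haa) | (exact haa.symm) | (exact (congrArg q (Fin.ext (by simp only [Fin.val_mk]; omega))).trans haa) | (exact haa.trans (congrArg q (Fin.ext (by simp only [Fin.val_mk]; omega)))) | (exact ((congrArg q (Fin.ext (by simp only [Fin.val_mk]; omega))).trans haa).symm) | (exact (haa.trans (congrArg q (Fin.ext (by simp only [Fin.val_mk]; omega)))).symm)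
  have hj1a : (pullSeq2 r (by omega) q) ⟨r + 1 + L, by omega⟩ = q ⟨r + 3 + L, by omega⟩ := by
    simp only [pullSeq2, Fin.val_mk]
    split_ifs <;> first | rfl | omega | (exact congrArg q (Fin.ext (by simp only [Fin.val_mk]; omega))) | (exact haa) | (exact haa.symm) | (exact (congrArg q (Fin.ext (by simp only [Fin.val_mk]; omega))).trans haa) | (exact haa.trans (congrArg q (Fin.ext (by simp only [Fin.val_mk]; omega)))) | (exact ((congrArg q (Fin.ext (by simp only [Fin.val_mk]; omega))).trans haa).symm) | (exact (haa.trans (congrArg q (Fin.ext (by simp only [Fin.val_mk]; omega)))).symm)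
  have hj1b : (pullSeq2 r (by omega) q) ⟨r + 1 + L + 1, by omega⟩ = q ⟨r, by omega⟩ := by
    simp only [pullSeq2, Fin.val_mk]
    split_ifs <;> first | rfl | omega | (exact congrArg q (Fin.ext (by simp only [Fin.val_mk]; omega))) | (exact haa) | (exact haa.symm) | (exact (congrArg q (Fin.ext (by simp only [Fin.val_mk]; omega))).trans haa) | (exact haa.trans (congrArg q (Fin.ext (by simp only [Fin.val_mk]; omega)))) | (exact ((congrArg q (Fin.ext (by simp only [Fin.val_mk]; omega))).trans haa).symm) | (exact (haa.trans (congrArg q (Fin.ext (by simp only [Fin.val_mk]; omega)))).symm)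
  have hc2a : (applyWord (List.range' (r + 2) (L + 1)).reverse (swapSeq (r + 1) q)) ⟨r + 2 + L, by omega⟩ = q ⟨r + 3 + L, by omega⟩ := by
    rw [hc2]
    simp only [Fin.val_mk]
    split_ifs <;> first | rfl | omega | (exact congrArg q (Fin.ext (by simp only [Fin.val_mk]; omega))) | (exact haa) | (exact haa.symm) | (exact (congrArg q (Fin.ext (by simp only [Fin.val_mk]; omega))).trans haa) | (exact haa.trans (congrArg q (Fin.ext (by simp only [Fin.val_mk]; omega)))) | (exact ((congrArg q (Fin.ext (by simp only [Fin.val_mk]; omega))).trans haa).symm) | (exact (haa.trans (congrArg q (Fin.ext (by simp only [Fin.val_mk]; omega)))).symm)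
  have hc2b : (applyWord (List.range' (r + 2) (L + 1)).reverse (swapSeq (r + 1) q)) ⟨r + 2 + L + 1, by omega⟩ = q ⟨r + 1, by omega⟩ := by
    rw [hc2]
    simp only [Fin.val_mk]
    split_ifs <;> first | rfl | omega | (exact congrArg q (Fin.ext (by simp only [Fin.val_mk]; omega))) | (exact haa) | (exact haa.symm) | (exact (congrArg q (Fin.ext (by simp only [Fin.val_mk]; omega))).trans haa) | (exact haa.trans (congrArg q (Fin.ext (by simp only [Fin.val_mk]; omega)))) | (exact ((congrArg q (Fin.ext (by simp only [Fin.val_mk]; omega))).trans haa).symm) | (exact (haa.trans (congrArg q (Fin.ext (by simp only [Fin.val_mk]; omega)))).symm)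
  have hdGa : applyWord (List.range' (r + 2) L).reverse (swapSeq r q) ⟨r + 2 + L, by omega⟩ = q ⟨r + 2, by omega⟩ := by
    rw [revRange'_top (swapSeq r q) (by omega) ⟨r + 2 + L, by omega⟩ rfl, swapSeq_apply hs1]
    simp only [Fin.val_mk]
    split_ifs <;> first | rfl | omega | (exact congrArg q (Fin.ext (by simp only [Fin.val_mk]; omega))) | (exact haa) | (exact haa.symm) | (exact (congrArg q (Fin.ext (by simp only [Fin.val_mk]; omega))).trans haa) | (exact haa.trans (congrArg q (Fin.ext (by simp only [Fin.val_mk]; omega)))) | (exact ((congrArg q (Fin.ext (by simp only [Fin.val_mk]; omega))).trans haa).symm) | (exact (haa.trans (congrArg q (Fin.ext (by simp only [Fin.val_mk]; omega)))).symm)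
  have hdGb : applyWord (List.range' (r + 2) L).reverse (swapSeq r q) ⟨r + 2 + L + 1, by omega⟩ = q ⟨r + 2 + L + 1, by omega⟩ := by
    rw [revRange'_gt (swapSeq r q) (by omega) ⟨r + 2 + L + 1, by omega⟩ (by simp only [Fin.val_mk]; omega),
      swapSeq_apply hs1]
    simp only [Fin.val_mk]
    split_ifs <;> first | rfl | omega | (exact congrArg q (Fin.ext (by simp only [Fin.val_mk]; omega))) | (exact haa) | (exact haa.symm) | (exact (congrArg q (Fin.ext (by simp only [Fin.val_mk]; omega))).trans haa) | (exact haa.trans (congrArg q (Fin.ext (by simp only [Fin.val_mk]; omega)))) | (exact ((congrArg q (Fin.ext (by simp only [Fin.val_mk]; omega))).trans haa).symm) | (exact (haa.trans (congrArg q (Fin.ext (by simp only [Fin.val_mk]; omega)))).symm)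
  have hdDa : applyWord (List.range' (r + 2) L).reverse (swapSeq (r + 1) q) ⟨r + 2 + L, by omega⟩ = q ⟨r + 1, by omega⟩ := by
    rw [revRange'_top (swapSeq (r + 1) q) (by omega) ⟨r + 2 + L, by omega⟩ rfl, swapSeq_apply hs2]
    simp only [Fin.val_mk]
    split_ifs <;> first | rfl | omega | (exact congrArg q (Fin.ext (by simp only [Fin.val_mk]; omega))) | (exact haa) | (exact haa.symm) | (exact (congrArg q (Fin.ext (by simp only [Fin.val_mk]; omega))).trans haa) | (exact haa.trans (congrArg q (Fin.ext (by simp only [Fin.val_mk]; omega)))) | (exact ((congrArg q (Fin.ext (by simp only [Fin.val_mk]; omega))).trans haa).symm) | (exact (haa.trans (congrArg q (Fin.ext (by simp only [Fin.val_mk]; omega)))).symm)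
  have hdDb : applyWord (List.range' (r + 2) L).reverse (swapSeq (r + 1) q) ⟨r + 2 + L + 1, by omega⟩ = q ⟨r + 2 + L + 1, by omega⟩ := by
    rw [revRange'_gt (swapSeq (r + 1) q) (by omega) ⟨r + 2 + L + 1, by omega⟩ (by simp only [Fin.val_mk]; omega),
      swapSeq_apply hs2]
    simp only [Fin.val_mk]
    split_ifs <;> first | rfl | omega | (exact congrArg q (Fin.ext (by simp only [Fin.val_mk]; omega))) | (exact haa) | (exact haa.symm) | (exact (congrArg q (Fin.ext (by simp only [Fin.val_mk]; omega))).trans haa) | (exact haa.trans (congrArg q (Fin.ext (by simp only [Fin.val_mk]; omega)))) | (exact ((congrArg q (Fin.ext (by simp only [Fin.val_mk]; omega))).trans haa).symm) | (exact (haa.trans (congrArg q (Fin.ext (by simp only [Fin.val_mk]; omega)))).symm)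
  have hd1a : applyWord (List.range' (r + 1) L).reverse (applyWord (List.range' (r + 2) (L + 1)).reverse (swapSeq (r + 1) q)) ⟨r + 1 + L, by omega⟩ = q ⟨r + 2, by omega⟩ := by
    rw [revRange'_top (applyWord (List.range' (r + 2) (L + 1)).reverse (swapSeq (r + 1) q)) (by omega) ⟨r + 1 + L, by omega⟩ rfl, hc2 ⟨r + 1, by omega⟩]
    simp only [Fin.val_mk]
    split_ifs <;> first | rfl | omega | (exact congrArg q (Fin.ext (by simp only [Fin.val_mk]; omega))) | (exact haa) | (exact haa.symm) | (exact (congrArg q (Fin.ext (by simp only [Fin.val_mk]; omega))).trans haa) | (exact haa.trans (congrArg q (Fin.ext (by simp only [Fin.val_mk]; omega)))) | (exact ((congrArg q (Fin.ext (by simp only [Fin.val_mk]; omega))).trans haa).symm) | (exact (haa.trans (congrArg q (Fin.ext (by simp only [Fin.val_mk]; omega)))).symm)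
  have hd1b : applyWord (List.range' (r + 1) L).reverse (applyWord (List.range' (r + 2) (L + 1)).reverse (swapSeq (r + 1) q)) ⟨r + 1 + L + 1, by omega⟩ = q ⟨r + 3 + L, by omega⟩ := by
    rw [revRange'_gt (applyWord (List.range' (r + 2) (L + 1)).reverse (swapSeq (r + 1) q)) (by omega) ⟨r + 1 + L + 1, by omega⟩ (by simp only [Fin.val_mk]; omega),
      hc2 ⟨r + 1 + L + 1, by omega⟩]
    simp only [Fin.val_mk]
    split_ifs <;> first | rfl | omega | (exact congrArg q (Fin.ext (by simp only [Fin.val_mk]; omega))) | (exact haa) | (exact haa.symm) | (exact (congrArg q (Fin.ext (by simp only [Fin.val_mk]; omega))).trans haa) | (exact haa.trans (congrArg q (Fin.ext (by simp only [Fin.val_mk]; omega)))) | (exact ((congrArg q (Fin.ext (by simp only [Fin.val_mk]; omega))).trans haa).symm) | (exact (haa.trans (congrArg q (Fin.ext (by simp only [Fin.val_mk]; omega)))).symm)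
  -- orthogonality
  have O1 : Orth adj (List.range' (r + 2) (L + 1)).reverse (swapSeq r q) := by
    apply orth_revRange' adj (swapSeq r q) (L + 1) (by omega)
    intro t ht
    have h1 : (swapSeq r q) ⟨r + 2, by omega⟩ = q ⟨r + 2, by omega⟩ := by
      rw [swapSeq_apply hs1]
      simp only [Fin.val_mk]
      split_ifs <;> first | rfl | omega | (exact congrArg q (Fin.ext (by simp only [Fin.val_mk]; omega))) | (exact haa) | (exact haa.symm) | (exact (congrArg q (Fin.ext (by simp only [Fin.val_mk]; omega))).trans haa) | (exact haa.trans (congrArg q (Fin.ext (by simp only [Fin.val_mk]; omega)))) | (exact ((congrArg q (Fin.ext (by simp only [Fin.val_mk]; omega))).trans haa).symm) | (exact (haa.trans (congrArg q (Fin.ext (by simp only [Fin.val_mk]; omega)))).symm)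
    have h2 : (swapSeq r q) ⟨r + 2 + t + 1, by omega⟩ = q ⟨r + 2 + t + 1, by omega⟩ := by
      rw [swapSeq_apply hs1]
      simp only [Fin.val_mk]
      split_ifs <;> first | rfl | omega | (exact congrArg q (Fin.ext (by simp only [Fin.val_mk]; omega))) | (exact haa) | (exact haa.symm) | (exact (congrArg q (Fin.ext (by simp only [Fin.val_mk]; omega))).trans haa) | (exact haa.trans (congrArg q (Fin.ext (by simp only [Fin.val_mk]; omega)))) | (exact ((congrArg q (Fin.ext (by simp only [Fin.val_mk]; omega))).trans haa).symm) | (exact (haa.trans (congrArg q (Fin.ext (by simp only [Fin.val_mk]; omega)))).symm)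
    rw [h1, h2, haa]
    have ht' := htail ⟨r + 2 + t + 1, by omega⟩ (by simp only [Fin.val_mk]; omega)
    exact ⟨Ne.symm ht'.1, ht'.2.1⟩
  have O2 : Orth adj (List.range' (r + 1) (L + 1)).reverse (applyWord (List.range' (r + 2) (L + 1)).reverse (swapSeq (r + 1) q)) := by
    apply orth_revRange' adj (applyWord (List.range' (r + 2) (L + 1)).reverse (swapSeq (r + 1) q)) (L + 1) (by omega)
    intro t ht
    have h1 : (applyWord (List.range' (r + 2) (L + 1)).reverse (swapSeq (r + 1) q)) ⟨r + 1, by omega⟩ = q ⟨r + 2, by omega⟩ := by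
      rw [hc2]
      simp only [Fin.val_mk]
      split_ifs <;> first | rfl | omega | (exact congrArg q (Fin.ext (by simp only [Fin.val_mk]; omega))) | (exact haa) | (exact haa.symm) | (exact (congrArg q (Fin.ext (by simp only [Fin.val_mk]; omega))).trans haa) | (exact haa.trans (congrArg q (Fin.ext (by simp only [Fin.val_mk]; omega)))) | (exact ((congrArg q (Fin.ext (by simp only [Fin.val_mk]; omega))).trans haa).symm) | (exact (haa.trans (congrArg q (Fin.ext (by simp only [Fin.val_mk]; omega)))).symm)
    have h2 : (applyWord (List.range' (r + 2) (L + 1)).reverse (swapSeq (r + 1) q)) ⟨r + 1 + t + 1, by omega⟩ = q ⟨r + 2 + t + 1, by omega⟩ := by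
      rw [hc2]
      simp only [Fin.val_mk]
      split_ifs <;> first | rfl | omega | (exact congrArg q (Fin.ext (by simp only [Fin.val_mk]; omega))) | (exact haa) | (exact haa.symm) | (exact (congrArg q (Fin.ext (by simp only [Fin.val_mk]; omega))).trans haa) | (exact haa.trans (congrArg q (Fin.ext (by simp only [Fin.val_mk]; omega)))) | (exact ((congrArg q (Fin.ext (by simp only [Fin.val_mk]; omega))).trans haa).symm) | (exact (haa.trans (congrArg q (Fin.ext (by simp only [Fin.val_mk]; omega)))).symm)
    rw [h1, h2, haa]
    have ht' := htail ⟨r + 2 + t + 1, by omega⟩ (by simp only [Fin.val_mk]; omega)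
    exact ⟨Ne.symm ht'.1, ht'.2.1⟩
  have O3 : Orth adj (List.range' (r + 2) (L + 1)).reverse (swapSeq (r + 1) q) := by
    apply orth_revRange' adj (swapSeq (r + 1) q) (L + 1) (by omega)
    intro t ht
    have h1 : (swapSeq (r + 1) q) ⟨r + 2, by omega⟩ = q ⟨r + 1, by omega⟩ := by
      rw [swapSeq_apply hs2]
      simp only [Fin.val_mk]
      split_ifs <;> first | rfl | omega | (exact congrArg q (Fin.ext (by simp only [Fin.val_mk]; omega))) | (exact haa) | (exact haa.symm) | (exact (congrArg q (Fin.ext (by simp only [Fin.val_mk]; omega))).trans haa) | (exact haa.trans (congrArg q (Fin.ext (by simp only [Fin.val_mk]; omega)))) | (exact ((congrArg q (Fin.ext (by simp only [Fin.val_mk]; omega))).trans haa).symm) | (exact (haa.trans (congrArg q (Fin.ext (by simp only [Fin.val_mk]; omega)))).symm)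
    have h2 : (swapSeq (r + 1) q) ⟨r + 2 + t + 1, by omega⟩ = q ⟨r + 2 + t + 1, by omega⟩ := by
      rw [swapSeq_apply hs2]
      simp only [Fin.val_mk]
      split_ifs <;> first | rfl | omega | (exact congrArg q (Fin.ext (by simp only [Fin.val_mk]; omega))) | (exact haa) | (exact haa.symm) | (exact (congrArg q (Fin.ext (by simp only [Fin.val_mk]; omega))).trans haa) | (exact haa.trans (congrArg q (Fin.ext (by simp only [Fin.val_mk]; omega)))) | (exact ((congrArg q (Fin.ext (by simp only [Fin.val_mk]; omega))).trans haa).symm) | (exact (haa.trans (congrArg q (Fin.ext (by simp only [Fin.val_mk]; omega)))).symm)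
    rw [h1, h2]
    have ht' := htail ⟨r + 2 + t + 1, by omega⟩ (by simp only [Fin.val_mk]; omega)
    exact ⟨Ne.symm ht'.2.2.1, ht'.2.2.2⟩
  -- applyWord facts
  have hA_on_j0 : applyWord (List.range' (r + 2) (L + 1)) (pullSeq1 r (by omega) q) = (swapSeq r q) := by
    rw [← F1, applyWord_applyWord_rev]
  have hB_on_j1 : applyWord (List.range' (r + 1) (L + 1)) (pullSeq2 r (by omega) q) = (applyWord (List.range' (r + 2) (L + 1)).reverse (swapSeq (r + 1) q)) := by
    rw [← F2, applyWord_applyWord_rev]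
  have hA_on_c2 : applyWord (List.range' (r + 2) (L + 1)) (applyWord (List.range' (r + 2) (L + 1)).reverse (swapSeq (r + 1) q)) = (swapSeq (r + 1) q) := applyWord_applyWord_rev (List.range' (r + 2) (L + 1)) (swapSeq (r + 1) q)
  have S1 : applyWord ([r, r + 1] ++ (List.range' (r + 2) (L + 1))) (pullSeq1 r (by omega) q) = q := by
    rw [applyWord_append, hA_on_j0]
    simp only [applyWord_cons, applyWord_nil]
    exact F3
  have S2 : applyWord ((List.range' (r + 2) (L + 1)).reverse ++ [r]) q = (pullSeq1 r (by omega) q) := by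
    rw [applyWord_append]
    simp only [applyWord_cons, applyWord_nil]
    exact F1
  have S3 : applyWord ([r + 1, r] ++ (List.range' (r + 2) (L + 1)) ++ (List.range' (r + 1) (L + 1))) (pullSeq2 r (by omega) q) = q := by
    rw [applyWord_append, hB_on_j1, applyWord_append, hA_on_c2]
    simp only [applyWord_cons, applyWord_nil]
    exact F4
  have S4 : applyWord ((List.range' (r + 1) (L + 1)).reverse ++ (List.range' (r + 2) (L + 1)).reverse ++ [r + 1]) q = (pullSeq2 r (by omega) q) := by
    rw [applyWord_append, applyWord_append]
    simp only [applyWord_cons, applyWord_nil]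
    exact F2
  have hfinA : (⟨r + 2 + L + 1, by omega⟩ : Fin (r + 4 + L)) = ⟨r + 3 + L, by omega⟩ :=
    Fin.ext (by simp only [Fin.val_mk]; omega)
  have hfinB : (⟨r + 1 + L + 1, by omega⟩ : Fin (r + 4 + L)) = ⟨r + 2 + L, by omega⟩ :=
    Fin.ext (by simp only [Fin.val_mk]; omega)
  have hW0 : [r, r + 1] ++ (List.range' (r + 2) (L + 1)) = ([r, r + 1] ++ (List.range' (r + 2) L)) ++ [r + 2 + L] := by
    rw [hAsplit, ← List.append_assoc]
  have hW1a : [r + 1, r] ++ (List.range' (r + 2) (L + 1)) = ([r + 1, r] ++ (List.range' (r + 2) L)) ++ [r + 2 + L] := by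
    rw [hAsplit, ← List.append_assoc]
  have hV0 : (List.range' (r + 2) (L + 1)).reverse ++ [r] = (r + 2 + L) :: ((List.range' (r + 2) L).reverse ++ [r]) := by
    rw [hArev]; rfl
  have hV1 : (List.range' (r + 1) (L + 1)).reverse ++ (List.range' (r + 2) (L + 1)).reverse ++ [r + 1] = (r + 1 + L) :: ((List.range' (r + 1) L).reverse ++ ((r + 2 + L) :: ((List.range' (r + 2) L).reverse ++ [r + 1]))) := by
    rw [hBrev, hArev]
    simp only [List.cons_append, List.append_assoc]
  -- slide for u0
  have h3a : K.x ⟨r + 3 + L, by omega⟩ q * chain K ([r, r + 1] ++ (List.range' (r + 2) (L + 1))) (pullSeq1 r (by omega) q)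
      = chain K ([r, r + 1] ++ (List.range' (r + 2) (L + 1))) (pullSeq1 r (by omega) q) * K.x ⟨r + 2 + L, by omega⟩ (pullSeq1 r (by omega) q) := by
    have hcol : (pullSeq1 r (by omega) q) ⟨r + 2 + L, by omega⟩ ≠ (pullSeq1 r (by omega) q) ⟨r + 2 + L + 1, by omega⟩ := by
      rw [hj0a, hj0b]
      exact (htail ⟨r + 3 + L, by omega⟩ (by simp only [Fin.val_mk]; omega)).1
    have hfar : ∀ a ∈ [r, r + 1] ++ (List.range' (r + 2) L), r + 2 + L + 1 ≠ a ∧ r + 2 + L + 1 ≠ a + 1 := by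
      intro a ha
      rcases List.mem_append.1 ha with h | h
      · simp only [List.mem_cons, List.not_mem_nil, or_false] at h
        rcases h with rfl | rfl <;> omega
      · obtain ⟨hx, hy⟩ := mem_range'_le h; omega
    have hh := slide_chain_diff_right K ([r, r + 1] ++ (List.range' (r + 2) L)) (r + 2 + L) (pullSeq1 r (by omega) q) (by omega) hcol hfar
    rw [← hW0, S1, hfinA] at hh
    exact hh
  -- slide for v0
  have h4a : K.x ⟨r + 2 + L, by omega⟩ (pullSeq1 r (by omega) q) * chain K ((List.range' (r + 2) (L + 1)).reverse ++ [r]) q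
      = chain K ((List.range' (r + 2) (L + 1)).reverse ++ [r]) q * K.x ⟨r + 3 + L, by omega⟩ q := by
    have hG : applyWord ((List.range' (r + 2) L).reverse ++ [r]) q = applyWord (List.range' (r + 2) L).reverse (swapSeq r q) := by
      rw [applyWord_append]
      simp only [applyWord_cons, applyWord_nil]
    have hcol : applyWord ((List.range' (r + 2) L).reverse ++ [r]) q ⟨r + 2 + L, by omega⟩
        ≠ applyWord ((List.range' (r + 2) L).reverse ++ [r]) q ⟨r + 2 + L + 1, by omega⟩ := by
      rw [hG, hdGa, hdGb, haa]
      exact Ne.symm (htail ⟨r + 2 + L + 1, by omega⟩ (by simp only [Fin.val_mk]; omega)).1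
    have hfar : ∀ a ∈ (List.range' (r + 2) L).reverse ++ [r], r + 2 + L + 1 ≠ a ∧ r + 2 + L + 1 ≠ a + 1 := by
      intro a ha
      rcases List.mem_append.1 ha with h | h
      · obtain ⟨hx, hy⟩ := mem_range'_le (List.mem_reverse.1 h); omega
      · simp only [List.mem_cons, List.not_mem_nil, or_false] at h
        subst h; omega
    have hh := slide_chain_diff_left K ((List.range' (r + 2) L).reverse ++ [r]) (r + 2 + L) q (by omega) hcol hfar
    rw [← hV0, S2, hfinA] at hh
    exact hh
  -- slide for u1
  have stage1 : K.x ⟨r + 2 + L, by omega⟩ (applyWord (List.range' (r + 2) (L + 1)).reverse (swapSeq (r + 1) q)) * chain K (List.range' (r + 1) (L + 1)) (pullSeq2 r (by omega) q)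
      = chain K (List.range' (r + 1) (L + 1)) (pullSeq2 r (by omega) q) * K.x ⟨r + 1 + L, by omega⟩ (pullSeq2 r (by omega) q) := by
    have hcol : (pullSeq2 r (by omega) q) ⟨r + 1 + L, by omega⟩ ≠ (pullSeq2 r (by omega) q) ⟨r + 1 + L + 1, by omega⟩ := by
      rw [hj1a, hj1b]
      exact (htail ⟨r + 3 + L, by omega⟩ (by simp only [Fin.val_mk]; omega)).1
    have hfar : ∀ a ∈ (List.range' (r + 1) L), r + 1 + L + 1 ≠ a ∧ r + 1 + L + 1 ≠ a + 1 := by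
      intro a ha
      obtain ⟨hx, hy⟩ := mem_range'_le ha; omega
    have hh := slide_chain_diff_right K (List.range' (r + 1) L) (r + 1 + L) (pullSeq2 r (by omega) q) (by omega) hcol hfar
    rw [← hBsplit, hB_on_j1, hfinB] at hh
    exact hh
  have stage2 : K.x ⟨r + 3 + L, by omega⟩ q * chain K ([r + 1, r] ++ (List.range' (r + 2) (L + 1))) (applyWord (List.range' (r + 2) (L + 1)).reverse (swapSeq (r + 1) q))
      = chain K ([r + 1, r] ++ (List.range' (r + 2) (L + 1))) (applyWord (List.range' (r + 2) (L + 1)).reverse (swapSeq (r + 1) q)) * K.x ⟨r + 2 + L, by omega⟩ (applyWord (List.range' (r + 2) (L + 1)).reverse (swapSeq (r + 1) q)) := by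
    have hcol : (applyWord (List.range' (r + 2) (L + 1)).reverse (swapSeq (r + 1) q)) ⟨r + 2 + L, by omega⟩ ≠ (applyWord (List.range' (r + 2) (L + 1)).reverse (swapSeq (r + 1) q)) ⟨r + 2 + L + 1, by omega⟩ := by
      rw [hc2a, hc2b]
      exact (htail ⟨r + 3 + L, by omega⟩ (by simp only [Fin.val_mk]; omega)).2.2.1
    have hfar : ∀ a ∈ [r + 1, r] ++ (List.range' (r + 2) L), r + 2 + L + 1 ≠ a ∧ r + 2 + L + 1 ≠ a + 1 := by
      intro a ha
      rcases List.mem_append.1 ha with h | h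
      · simp only [List.mem_cons, List.not_mem_nil, or_false] at h
        rcases h with rfl | rfl <;> omega
      · obtain ⟨hx, hy⟩ := mem_range'_le h; omega
    have happ : applyWord ([r + 1, r] ++ (List.range' (r + 2) (L + 1))) (applyWord (List.range' (r + 2) (L + 1)).reverse (swapSeq (r + 1) q)) = q := by
      rw [← hB_on_j1, ← applyWord_append]
      exact S3
    have hh := slide_chain_diff_right K ([r + 1, r] ++ (List.range' (r + 2) L)) (r + 2 + L) (applyWord (List.range' (r + 2) (L + 1)).reverse (swapSeq (r + 1) q)) (by omega) hcol hfar
    rw [← hW1a, happ, hfinA] at hh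
    exact hh
  have h3c : K.x ⟨r + 3 + L, by omega⟩ q * chain K ([r + 1, r] ++ (List.range' (r + 2) (L + 1)) ++ (List.range' (r + 1) (L + 1))) (pullSeq2 r (by omega) q)
      = chain K ([r + 1, r] ++ (List.range' (r + 2) (L + 1)) ++ (List.range' (r + 1) (L + 1))) (pullSeq2 r (by omega) q) * K.x ⟨r + 1 + L, by omega⟩ (pullSeq2 r (by omega) q) := by
    rw [chain_append K ([r + 1, r] ++ (List.range' (r + 2) (L + 1))) (List.range' (r + 1) (L + 1)) (pullSeq2 r (by omega) q), hB_on_j1]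
    exact conj_assemble stage2 stage1
  have h3c' : K.x ⟨r + 3 + L, by omega⟩ q * (-chain K ([r + 1, r] ++ (List.range' (r + 2) (L + 1)) ++ (List.range' (r + 1) (L + 1))) (pullSeq2 r (by omega) q))
      = (-chain K ([r + 1, r] ++ (List.range' (r + 2) (L + 1)) ++ (List.range' (r + 1) (L + 1))) (pullSeq2 r (by omega) q)) * K.x ⟨r + 1 + L, by omega⟩ (pullSeq2 r (by omega) q) := by
    rw [mul_neg, neg_mul, h3c]
  -- slide for v1
  have hG2q : applyWord ((List.range' (r + 2) L).reverse ++ [r + 1]) q = applyWord (List.range' (r + 2) L).reverse (swapSeq (r + 1) q) := by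
    rw [applyWord_append]
    simp only [applyWord_cons, applyWord_nil]
  have hmid : applyWord ((r + 2 + L) :: ((List.range' (r + 2) L).reverse ++ [r + 1])) q = (applyWord (List.range' (r + 2) (L + 1)).reverse (swapSeq (r + 1) q)) := by
    simp only [applyWord_cons, hG2q]
    rw [hArev]
    simp only [applyWord_cons]
  have hinner : K.x ⟨r + 2 + L, by omega⟩ (applyWord (List.range' (r + 2) (L + 1)).reverse (swapSeq (r + 1) q)) * chain K ((r + 2 + L) :: ((List.range' (r + 2) L).reverse ++ [r + 1])) q
      = chain K ((r + 2 + L) :: ((List.range' (r + 2) L).reverse ++ [r + 1])) q * K.x ⟨r + 3 + L, by omega⟩ q := by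
    have hcol : applyWord ((List.range' (r + 2) L).reverse ++ [r + 1]) q ⟨r + 2 + L, by omega⟩ ≠ applyWord ((List.range' (r + 2) L).reverse ++ [r + 1]) q ⟨r + 2 + L + 1, by omega⟩ := by
      rw [hG2q, hdDa, hdDb]
      exact Ne.symm (htail ⟨r + 2 + L + 1, by omega⟩ (by simp only [Fin.val_mk]; omega)).2.2.1
    have hfar : ∀ a ∈ ((List.range' (r + 2) L).reverse ++ [r + 1]), r + 2 + L + 1 ≠ a ∧ r + 2 + L + 1 ≠ a + 1 := by
      intro a ha
      rcases List.mem_append.1 ha with h | h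
      · obtain ⟨hx, hy⟩ := mem_range'_le (List.mem_reverse.1 h); omega
      · simp only [List.mem_cons, List.not_mem_nil, or_false] at h
        subst h; omega
    have hh := slide_chain_diff_left K ((List.range' (r + 2) L).reverse ++ [r + 1]) (r + 2 + L) q (by omega) hcol hfar
    rw [hmid, hfinA] at hh
    exact hh
  have hd1 : applyWord ((List.range' (r + 1) L).reverse ++ ((r + 2 + L) :: ((List.range' (r + 2) L).reverse ++ [r + 1]))) q = applyWord (List.range' (r + 1) L).reverse (applyWord (List.range' (r + 2) (L + 1)).reverse (swapSeq (r + 1) q)) := by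
    rw [applyWord_append, hmid]
  have houter : K.x ⟨r + 2 + L, by omega⟩ (applyWord ((List.range' (r + 1) L).reverse ++ ((r + 2 + L) :: ((List.range' (r + 2) L).reverse ++ [r + 1]))) q) * chain K (List.range' (r + 1) L).reverse (applyWord (List.range' (r + 2) (L + 1)).reverse (swapSeq (r + 1) q))
      = chain K (List.range' (r + 1) L).reverse (applyWord (List.range' (r + 2) (L + 1)).reverse (swapSeq (r + 1) q)) * K.x ⟨r + 2 + L, by omega⟩ (applyWord (List.range' (r + 2) (L + 1)).reverse (swapSeq (r + 1) q)) := by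
    have hh := chain_x_far K (show r + 2 + L < r + 4 + L by omega) (List.range' (r + 1) L).reverse (applyWord (List.range' (r + 2) (L + 1)).reverse (swapSeq (r + 1) q))
      (by intro a ha; obtain ⟨hx, hy⟩ := mem_range'_le (List.mem_reverse.1 ha); omega)
    rw [← hd1] at hh
    exact hh
  have hS4' : swapSeq (r + 1 + L) (applyWord ((List.range' (r + 1) L).reverse ++ ((r + 2 + L) :: ((List.range' (r + 2) L).reverse ++ [r + 1]))) q) = (pullSeq2 r (by omega) q) := by
    rw [hd1, ← F2, hBrev]
    simp only [applyWord_cons]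
  have hstageA : K.x ⟨r + 1 + L, by omega⟩ (pullSeq2 r (by omega) q) * K.δ (r + 1 + L) (applyWord ((List.range' (r + 1) L).reverse ++ ((r + 2 + L) :: ((List.range' (r + 2) L).reverse ++ [r + 1]))) q)
      = K.δ (r + 1 + L) (applyWord ((List.range' (r + 1) L).reverse ++ ((r + 2 + L) :: ((List.range' (r + 2) L).reverse ++ [r + 1]))) q) * K.x ⟨r + 2 + L, by omega⟩ (applyWord ((List.range' (r + 1) L).reverse ++ ((r + 2 + L) :: ((List.range' (r + 2) L).reverse ++ [r + 1]))) q) := by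
    have hcol : applyWord ((List.range' (r + 1) L).reverse ++ ((r + 2 + L) :: ((List.range' (r + 2) L).reverse ++ [r + 1]))) q ⟨r + 1 + L, by omega⟩ ≠ applyWord ((List.range' (r + 1) L).reverse ++ ((r + 2 + L) :: ((List.range' (r + 2) L).reverse ++ [r + 1]))) q ⟨r + 1 + L + 1, by omega⟩ := by
      rw [hd1, hd1a, hd1b, haa]
      exact Ne.symm (htail ⟨r + 3 + L, by omega⟩ (by simp only [Fin.val_mk]; omega)).1
    have hh := (K.δx_diff2 (r + 1 + L) (by omega) (applyWord ((List.range' (r + 1) L).reverse ++ ((r + 2 + L) :: ((List.range' (r + 2) L).reverse ++ [r + 1]))) q) hcol).symm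
    rw [hS4', hfinB] at hh
    exact hh
  have h4c : K.x ⟨r + 1 + L, by omega⟩ (pullSeq2 r (by omega) q) * chain K ((List.range' (r + 1) (L + 1)).reverse ++ (List.range' (r + 2) (L + 1)).reverse ++ [r + 1]) q
      = chain K ((List.range' (r + 1) (L + 1)).reverse ++ (List.range' (r + 2) (L + 1)).reverse ++ [r + 1]) q * K.x ⟨r + 3 + L, by omega⟩ q := by
    rw [hV1, chain_cons K (r + 1 + L) ((List.range' (r + 1) L).reverse ++ ((r + 2 + L) :: ((List.range' (r + 2) L).reverse ++ [r + 1]))) q,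
      chain_append K (List.range' (r + 1) L).reverse ((r + 2 + L) :: ((List.range' (r + 2) L).reverse ++ [r + 1])) q, hmid]
    exact conj_assemble hstageA (conj_assemble houter hinner)
  -- idempotent bordering
  have cond1a : chain K ([r, r + 1] ++ (List.range' (r + 2) (L + 1))) (pullSeq1 r (by omega) q) = K.e q * chain K ([r, r + 1] ++ (List.range' (r + 2) (L + 1))) (pullSeq1 r (by omega) q) * K.e (pullSeq1 r (by omega) q) := by
    have hh := e_chain K ([r, r + 1] ++ (List.range' (r + 2) (L + 1))) (pullSeq1 r (by omega) q)
    rw [S1] at hh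
    rw [hh, chain_e]
  have cond1b : (-chain K ([r + 1, r] ++ (List.range' (r + 2) (L + 1)) ++ (List.range' (r + 1) (L + 1))) (pullSeq2 r (by omega) q)) = K.e q * (-chain K ([r + 1, r] ++ (List.range' (r + 2) (L + 1)) ++ (List.range' (r + 1) (L + 1))) (pullSeq2 r (by omega) q)) * K.e (pullSeq2 r (by omega) q) := by
    have hh := e_chain K ([r + 1, r] ++ (List.range' (r + 2) (L + 1)) ++ (List.range' (r + 1) (L + 1))) (pullSeq2 r (by omega) q)
    rw [S3] at hh
    rw [mul_neg, neg_mul, hh, chain_e]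
  have cond2a : chain K ((List.range' (r + 2) (L + 1)).reverse ++ [r]) q = K.e (pullSeq1 r (by omega) q) * chain K ((List.range' (r + 2) (L + 1)).reverse ++ [r]) q * K.e q := by
    have hh := e_chain K ((List.range' (r + 2) (L + 1)).reverse ++ [r]) q
    rw [S2] at hh
    rw [hh, chain_e]
  have cond2b : chain K ((List.range' (r + 1) (L + 1)).reverse ++ (List.range' (r + 2) (L + 1)).reverse ++ [r + 1]) q = K.e (pullSeq2 r (by omega) q) * chain K ((List.range' (r + 1) (L + 1)).reverse ++ (List.range' (r + 2) (L + 1)).reverse ++ [r + 1]) q * K.e q := by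
    have hh := e_chain K ((List.range' (r + 1) (L + 1)).reverse ++ (List.range' (r + 2) (L + 1)).reverse ++ [r + 1]) q
    rw [S4] at hh
    rw [hh, chain_e]
  -- cancellations
  have hcanA0 : chain K (List.range' (r + 2) (L + 1)) (pullSeq1 r (by omega) q) * chain K (List.range' (r + 2) (L + 1)).reverse (swapSeq r q) = K.e (swapSeq r q) := by
    have hh := chain_cancel K (List.range' (r + 2) (L + 1)).reverse (swapSeq r q) O1
    rw [List.reverse_reverse, F1] at hh
    exact hh
  have hcanB : chain K (List.range' (r + 1) (L + 1)) (pullSeq2 r (by omega) q) * chain K (List.range' (r + 1) (L + 1)).reverse (applyWord (List.range' (r + 2) (L + 1)).reverse (swapSeq (r + 1) q)) = K.e (applyWord (List.range' (r + 2) (L + 1)).reverse (swapSeq (r + 1) q)) := by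
    have hh := chain_cancel K (List.range' (r + 1) (L + 1)).reverse (applyWord (List.range' (r + 2) (L + 1)).reverse (swapSeq (r + 1) q)) O2
    rw [List.reverse_reverse, F2] at hh
    exact hh
  have hcanA1 : chain K (List.range' (r + 2) (L + 1)) (applyWord (List.range' (r + 2) (L + 1)).reverse (swapSeq (r + 1) q)) * chain K (List.range' (r + 2) (L + 1)).reverse (swapSeq (r + 1) q) = K.e (swapSeq (r + 1) q) := by
    have hh := chain_cancel K (List.range' (r + 2) (L + 1)).reverse (swapSeq (r + 1) q) O3
    rw [List.reverse_reverse] at hh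
    exact hh
  -- products
  have hu0v0 : chain K ([r, r + 1] ++ (List.range' (r + 2) (L + 1))) (pullSeq1 r (by omega) q) * chain K ((List.range' (r + 2) (L + 1)).reverse ++ [r]) q
      = K.δ r (swapSeq (r + 1) (swapSeq r q)) * K.δ (r + 1) (swapSeq r q) * K.δ r q := by
    rw [chain_append K [r, r + 1] (List.range' (r + 2) (L + 1)) (pullSeq1 r (by omega) q), hA_on_j0, chain_append K (List.range' (r + 2) (L + 1)).reverse [r] q]
    simp only [applyWord_cons, applyWord_nil, chain_cons, chain_nil]
    rw [mul_assoc ((K.δ r (swapSeq (r + 1) (swapSeq r q))) * ((K.δ (r + 1) (swapSeq r q)) * K.e (swapSeq r q)))]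
    rw [← mul_assoc (chain K (List.range' (r + 2) (L + 1)) (pullSeq1 r (by omega) q)), hcanA0]
    rw [← mul_assoc (K.e (swapSeq r q)), K.e_mul_δ r q, K.δ_mul_e r q]
    rw [mul_assoc (K.δ r (swapSeq (r + 1) (swapSeq r q))), mul_assoc (K.δ (r + 1) (swapSeq r q)), K.e_mul_δ r q, ← mul_assoc]
  have hu1v1 : chain K ([r + 1, r] ++ (List.range' (r + 2) (L + 1)) ++ (List.range' (r + 1) (L + 1))) (pullSeq2 r (by omega) q) * chain K ((List.range' (r + 1) (L + 1)).reverse ++ (List.range' (r + 2) (L + 1)).reverse ++ [r + 1]) q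
      = K.δ (r + 1) (swapSeq r (swapSeq (r + 1) q)) * K.δ r (swapSeq (r + 1) q) * K.δ (r + 1) q := by
    rw [chain_append K ([r + 1, r] ++ (List.range' (r + 2) (L + 1))) (List.range' (r + 1) (L + 1)) (pullSeq2 r (by omega) q), hB_on_j1,
      chain_append K [r + 1, r] (List.range' (r + 2) (L + 1)) (applyWord (List.range' (r + 2) (L + 1)).reverse (swapSeq (r + 1) q)), hA_on_c2,
      chain_append K ((List.range' (r + 1) (L + 1)).reverse ++ (List.range' (r + 2) (L + 1)).reverse) [r + 1] q,
      chain_append K (List.range' (r + 1) (L + 1)).reverse (List.range' (r + 2) (L + 1)).reverse]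
    simp only [applyWord_cons, applyWord_nil, chain_cons, chain_nil]
    rw [mul_assoc ((K.δ (r + 1) (swapSeq r (swapSeq (r + 1) q))) * ((K.δ r (swapSeq (r + 1) q)) * K.e (swapSeq (r + 1) q)) * chain K (List.range' (r + 2) (L + 1)) (applyWord (List.range' (r + 2) (L + 1)).reverse (swapSeq (r + 1) q)))]
    rw [mul_assoc (chain K (List.range' (r + 1) (L + 1)).reverse (applyWord (List.range' (r + 2) (L + 1)).reverse (swapSeq (r + 1) q)))]
    rw [← mul_assoc (chain K (List.range' (r + 1) (L + 1)) (pullSeq2 r (by omega) q)), hcanB]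
    rw [← mul_assoc (K.e (applyWord (List.range' (r + 2) (L + 1)).reverse (swapSeq (r + 1) q))), e_chain K (List.range' (r + 2) (L + 1)).reverse (swapSeq (r + 1) q)]
    rw [mul_assoc ((K.δ (r + 1) (swapSeq r (swapSeq (r + 1) q))) * ((K.δ r (swapSeq (r + 1) q)) * K.e (swapSeq (r + 1) q)))]
    rw [← mul_assoc (chain K (List.range' (r + 2) (L + 1)) (applyWord (List.range' (r + 2) (L + 1)).reverse (swapSeq (r + 1) q))), hcanA1]
    rw [← mul_assoc (K.e (swapSeq (r + 1) q)), K.e_mul_δ (r + 1) q, K.δ_mul_e (r + 1) q]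
    rw [mul_assoc (K.δ (r + 1) (swapSeq r (swapSeq (r + 1) q))), mul_assoc (K.δ r (swapSeq (r + 1) q)), K.e_mul_δ (r + 1) q, ← mul_assoc]
  -- assemble
  refine ⟨![(chain K ([r, r + 1] ++ (List.range' (r + 2) (L + 1))) (pullSeq1 r (by omega) q)), (-chain K ([r + 1, r] ++ (List.range' (r + 2) (L + 1)) ++ (List.range' (r + 1) (L + 1))) (pullSeq2 r (by omega) q))], ![(chain K ((List.range' (r + 2) (L + 1)).reverse ++ [r]) q), (chain K ((List.range' (r + 1) (L + 1)).reverse ++ (List.range' (r + 2) (L + 1)).reverse ++ [r + 1]) q)], ?_, ?_, ?_, ?_, ?_⟩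
  · intro a
    fin_cases a
    · simpa only [Fin.zero_eta, Fin.mk_one, Fin.isValue, Matrix.cons_val_zero,
        Matrix.cons_val_one, Matrix.head_cons] using cond1a
    · simpa only [Fin.zero_eta, Fin.mk_one, Fin.isValue, Matrix.cons_val_zero,
        Matrix.cons_val_one, Matrix.head_cons] using cond1b
  · intro a
    fin_cases a
    · simpa only [Fin.zero_eta, Fin.mk_one, Fin.isValue, Matrix.cons_val_zero,
        Matrix.cons_val_one, Matrix.head_cons] using cond2a
    · simpa only [Fin.zero_eta, Fin.mk_one, Fin.isValue, Matrix.cons_val_zero,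
        Matrix.cons_val_one, Matrix.head_cons] using cond2b
  · intro a
    fin_cases a
    · simpa only [Fin.zero_eta, Fin.mk_one, Fin.isValue, Matrix.cons_val_zero,
        Matrix.cons_val_one, Matrix.head_cons] using h3a
    · simpa only [Fin.zero_eta, Fin.mk_one, Fin.isValue, Matrix.cons_val_zero,
        Matrix.cons_val_one, Matrix.head_cons] using h3c'
  · intro a
    fin_cases a
    · simpa only [Fin.zero_eta, Fin.mk_one, Fin.isValue, Matrix.cons_val_zero,
        Matrix.cons_val_one, Matrix.head_cons] using h4a
    · simpa only [Fin.zero_eta, Fin.mk_one, Fin.isValue, Matrix.cons_val_zero,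
        Matrix.cons_val_one, Matrix.head_cons] using h4c
  · rw [Fin.sum_univ_two]
    simp only [Fin.isValue, Matrix.cons_val_zero, Matrix.cons_val_one, Matrix.head_cons]
    rw [hu0v0, neg_mul, hu1v1, ← sub_eq_add_neg]
    exact (K.braid_hard r (by omega) q haa.symm hadj).symm

end KLRPaper
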